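/- Let R be a local ring with maximal ideal M and residue field k = R/M, complete with respect to the M-adic topology, and suppose the residue field k has characteristic zero. Then the natural surjective ring map R → k admits a ring-homomorphism section. -/

import Mathlib

open IsLocalRing Polynomial

section
variable {R : Type*} [CommRing R] [IsLocalRing R]

lemma aux_isUnit_of_residue_ne_zero {x : R} (h : residue R x ≠ 0) : IsUnit x := by
  by_contra hx
  exact h (Ideal.Quotient.eq_zero_iff_mem.mpr ((mem_maximalIdeal x).mpr hx))

variable (R) in
/-- A partial coefficient field: a subfield of the residue field with a ring-hom lift to `R`
that sections the residue map. -/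
structure AuxPL where
  F : Subfield (ResidueField R)
  f : F →+* R
  sec : ∀ x : F, residue R (f x) = x

instance : Preorder (AuxPL R) where
  le L₁ L₂ := ∃ h : L₁.F ≤ L₂.F, ∀ x : L₁.F, L₂.f ⟨x.1, h x.2⟩ = L₁.f x
  le_refl L := ⟨le_rfl, fun x => rfl⟩
  le_trans L₁ L₂ L₃ := by
    rintro ⟨h₁, e₁⟩ ⟨h₂, e₂⟩
    exact ⟨h₁.trans h₂, fun x => (e₂ ⟨x.1, h₁ x.2⟩).trans (e₁ x)⟩

end

section
variable {R : Type*} [CommRing R] [IsLocalRing R]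

lemma AuxPL.chain_ub (c : Set (AuxPL R)) (hc : IsChain (· ≤ ·) c) (hne : c.Nonempty) :
    ∃ ub : AuxPL R, ∀ L ∈ c, L ≤ ub := by
  haveI : Nonempty c := hne.to_subtype
  set S : c → Subfield (ResidueField R) := fun L => L.1.F with hS
  have dir : Directed (· ≤ ·) S := by
    intro i j
    rcases hc.total i.2 j.2 with h | h
    · exact ⟨j, h.1, le_rfl⟩
    · exact ⟨i, le_rfl, h.1⟩
  have hmem : ∀ {x : ResidueField R}, x ∈ ⨆ i, S i ↔ ∃ i, x ∈ S i :=
    Subfield.mem_iSup_of_directed dir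
  -- well-definedness of values across the chain
  have wd : ∀ (x : ResidueField R) (i j : c) (hi : x ∈ S i) (hj : x ∈ S j),
      i.1.f ⟨x, hi⟩ = j.1.f ⟨x, hj⟩ := by
    intro x i j hi hj
    rcases hc.total i.2 j.2 with ⟨h, he⟩ | ⟨h, he⟩
    · exact (he ⟨x, hi⟩).symm
    · exact he ⟨x, hj⟩
  have pick : ∀ x : (⨆ i, S i : Subfield (ResidueField R)), ∃ i : c, x.1 ∈ S i :=
    fun x => hmem.mp x.2
  choose idx hidx using pick
  -- common index helper
  have key : ∀ (x : (⨆ i, S i : Subfield (ResidueField R))) (j : c) (hj : x.1 ∈ S j),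
      (idx x).1.f ⟨x.1, hidx x⟩ = j.1.f ⟨x.1, hj⟩ := fun x j hj => wd x.1 _ j _ hj
  refine ⟨⟨⨆ i, S i,
    { toFun := fun x => (idx x).1.f ⟨x.1, hidx x⟩
      map_one' := ?_
      map_mul' := ?_
      map_zero' := ?_
      map_add' := ?_ }, ?_⟩, ?_⟩
  · obtain ⟨i⟩ := (inferInstance : Nonempty c)
    rw [key 1 i (one_mem _), show (⟨(1 : ↥(⨆ i, S i)).1, one_mem _⟩ : i.1.F) = 1 from Subtype.ext rfl]
    exact i.1.f.map_one
  · intro x y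
    obtain ⟨u, hxu, hyu⟩ := dir (idx x) (idx y)
    have hxyu : (x * y).1 ∈ S u := mul_mem (hxu (hidx x)) (hyu (hidx y))
    rw [key (x * y) u hxyu, key x u (hxu (hidx x)), key y u (hyu (hidx y)),
      show (⟨(x * y).1, hxyu⟩ : u.1.F) = ⟨x.1, hxu (hidx x)⟩ * ⟨y.1, hyu (hidx y)⟩ from
        Subtype.ext rfl]
    exact u.1.f.map_mul _ _
  · obtain ⟨i⟩ := (inferInstance : Nonempty c)
    rw [key 0 i (zero_mem _), show (⟨(0 : ↥(⨆ i, S i)).1, zero_mem _⟩ : i.1.F) = 0 from Subtype.ext rfl]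
    exact i.1.f.map_zero
  · intro x y
    obtain ⟨u, hxu, hyu⟩ := dir (idx x) (idx y)
    have hxyu : (x + y).1 ∈ S u := add_mem (hxu (hidx x)) (hyu (hidx y))
    rw [key (x + y) u hxyu, key x u (hxu (hidx x)), key y u (hyu (hidx y)),
      show (⟨(x + y).1, hxyu⟩ : u.1.F) = ⟨x.1, hxu (hidx x)⟩ + ⟨y.1, hyu (hidx y)⟩ from
        Subtype.ext rfl]
    exact u.1.f.map_add _ _
  · intro x
    exact (idx x).1.sec _
  · intro L hL
    refine ⟨?_, ?_⟩
    · intro x hx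
      exact hmem.mpr ⟨⟨L, hL⟩, hx⟩
    · intro x
      exact key ⟨x.1, hmem.mpr ⟨⟨L, hL⟩, x.2⟩⟩ ⟨L, hL⟩ x.2

end

section
variable {R : Type*} [CommRing R] [IsLocalRing R]

/-- Any field `E` mapping compatibly to `R` and to the residue field gives a partial lift
whose domain is the image of `E`. -/
lemma AuxPL.exists_of_homs {E : Type*} [Field E]
    (cR : E →+* R) (ck : E →+* ResidueField R)
    (hcomp : ∀ e, residue R (cR e) = ck e) :
    ∃ L' : AuxPL R, L'.F = ck.fieldRange ∧
      ∀ (e : E) (h : ck e ∈ L'.F), L'.f ⟨ck e, h⟩ = cR e := by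
  have hbij : Function.Bijective ck.rangeRestrictField := by
    constructor
    · intro a b hab
      apply ck.injective
      have := congrArg (Subtype.val) hab
      simpa [RingHom.coe_rangeRestrictField] using this
    · rintro ⟨y, e, rfl⟩
      exact ⟨e, Subtype.ext (ck.coe_rangeRestrictField e)⟩
  set er := RingEquiv.ofBijective ck.rangeRestrictField hbij with her
  have her_apply : ∀ e : E, (er e : ResidueField R) = ck e := fun e =>
    ck.coe_rangeRestrictField e
  refine ⟨⟨ck.fieldRange, cR.comp (er.symm : ck.fieldRange →+* E), ?_⟩, rfl, ?_⟩
  · intro x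
    have h1 : (er (er.symm x) : ResidueField R) = x := by rw [RingEquiv.apply_symm_apply]
    show residue R (cR (er.symm x)) = x
    rw [hcomp, ← her_apply]
    exact h1
  · intro e h
    have hee : er e = ⟨ck e, h⟩ := Subtype.ext (her_apply e)
    show cR (er.symm ⟨ck e, h⟩) = cR e
    rw [← hee, RingEquiv.symm_apply_apply]

/-- Extension step: a compatible pair of homs from a field `E` whose residue image contains
the image of `L` yields an extension of `L`. -/
lemma AuxPL.step (L : AuxPL R) {E : Type*} [Field E]
    (cR : E →+* R) (ck : E →+* ResidueField R)
    (hcomp : ∀ e, residue R (cR e) = ck e)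
    (hF : ∀ b : L.F, ∃ e, ck e = b ∧ cR e = L.f b) :
    ∃ L' : AuxPL R, L ≤ L' ∧ ∀ y, (∃ e, ck e = y) → y ∈ L'.F := by
  obtain ⟨L', hL'F, hL'f⟩ := AuxPL.exists_of_homs cR ck hcomp
  have hle : L.F ≤ L'.F := by
    intro b hb
    obtain ⟨e, he, -⟩ := hF ⟨b, hb⟩
    rw [hL'F]
    exact ⟨e, he⟩
  refine ⟨L', ⟨hle, ?_⟩, ?_⟩
  · intro x
    obtain ⟨e, he1, he2⟩ := hF x
    have h : ck e ∈ L'.F := by rw [hL'F]; exact ⟨e, rfl⟩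
    have : (⟨x.1, hle x.2⟩ : L'.F) = ⟨ck e, h⟩ := Subtype.ext he1.symm
    rw [this, hL'f e h, he2]
  · rintro y ⟨e, rfl⟩
    rw [hL'F]
    exact ⟨e, rfl⟩

variable (R) in
lemma AuxPL.nonempty [CharZero (ResidueField R)] : Nonempty (AuxPL R) := by
  have hu : ∀ m : nonZeroDivisors ℤ, IsUnit ((Int.castRingHom R) m.1) := by
    intro m
    apply aux_isUnit_of_residue_ne_zero
    have h1 : residue R ((Int.castRingHom R) m.1) = ((m.1 : ℤ) : ResidueField R) := by
      simp [map_intCast]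
    rw [h1]
    exact Int.cast_ne_zero.mpr (nonZeroDivisors.coe_ne_zero m)
  let q : ℚ →+* R := IsLocalization.lift (M := nonZeroDivisors ℤ) (S := ℚ) hu
  obtain ⟨L, -, -⟩ := AuxPL.exists_of_homs q ((residue R).comp q) (fun e => rfl)
  exact ⟨L⟩

end

/-- Let `R` be a local ring with maximal ideal `M` and residue field `k = R/M`,
complete with respect to the `M`-adic topology, whose residue field has
characteristic zero. Then the natural surjective ring map `R → k` admits a
ring-homomorphism section. -/
theorem stmt_1 (R : Type*) [CommRing R] [IsLocalRing R]
    [IsAdicComplete (IsLocalRing.maximalIdeal R) R]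
    [CharZero (IsLocalRing.ResidueField R)] :
    ∃ g : IsLocalRing.ResidueField R →+* R,
      (IsLocalRing.residue R).comp g = RingHom.id (IsLocalRing.ResidueField R) := by
  obtain ⟨L₀⟩ := AuxPL.nonempty R
  obtain ⟨M, hM⟩ := zorn_le (α := AuxPL R) (fun c hc => by
    rcases c.eq_empty_or_nonempty with rfl | hne
    · exact ⟨L₀, by simp [upperBounds]⟩
    · obtain ⟨ub, hub⟩ := AuxPL.chain_ub c hc hne
      exact ⟨ub, hub⟩)
  -- the maximal partial lift is defined on all of the residue field
  have halgmap : (residue R).comp M.f = algebraMap M.F (ResidueField R) :=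
    RingHom.ext fun b => M.sec b
  have htop : ∀ y, y ∈ M.F := by
    by_contra hcon
    push_neg at hcon
    obtain ⟨x, hx⟩ := hcon
    have hcontra : ∀ L' : AuxPL R, M ≤ L' → x ∈ L'.F → False := by
      intro L' hle hmem
      exact hx ((hM hle).1 hmem)
    by_cases halg : IsAlgebraic M.F x
    · -- algebraic case: use Henselian lifting of the minimal polynomial
      have hint : IsIntegral M.F x := halg.isIntegral
      set p := minpoly M.F x with hp
      have hirr := minpoly.irreducible hint
      have hmonic := minpoly.monic hint
      haveI := Fact.mk hirr
      obtain ⟨a₀, ha₀⟩ := residue_surjective (R := R) x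
      set P := p.map M.f with hP
      have hkey : ∀ b : R, residue R (P.eval b) = eval₂ (algebraMap M.F (ResidueField R))
          (residue R b) p := by
        intro b
        rw [hP, ← Polynomial.eval₂_at_apply (residue R) b, Polynomial.eval₂_map, halgmap]
      have hkeyd : ∀ b : R, residue R (P.derivative.eval b) =
          eval₂ (algebraMap M.F (ResidueField R)) (residue R b) p.derivative := by
        intro b
        rw [hP, Polynomial.derivative_map, ← Polynomial.eval₂_at_apply (residue R) b,
          Polynomial.eval₂_map, halgmap]
      have heval : P.eval a₀ ∈ maximalIdeal R := by
        rw [← Ideal.Quotient.eq_zero_iff_mem]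
        show residue R (P.eval a₀) = 0
        rw [hkey, ha₀, ← aeval_def, minpoly.aeval]
      have hdne : aeval x p.derivative ≠ 0 := by
        obtain ⟨u, v, huv⟩ := hirr.separable
        intro h0
        rw [aeval_def] at h0
        have h1 := congrArg (eval₂ (algebraMap M.F (ResidueField R)) x) huv
        rw [eval₂_add, eval₂_mul, eval₂_mul, eval₂_one, ← hp] at h1
        have h2 : eval₂ (algebraMap M.F (ResidueField R)) x p = 0 := by
          rw [← aeval_def]; exact minpoly.aeval _ _
        rw [h2, h0, mul_zero, mul_zero, add_zero] at h1
        exact zero_ne_one h1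
      have hderiv : IsUnit (Ideal.Quotient.mk (maximalIdeal R) (P.derivative.eval a₀)) := by
        show IsUnit (residue R (P.derivative.eval a₀))
        apply isUnit_iff_ne_zero.mpr
        show residue R (P.derivative.eval a₀) ≠ 0
        rw [hkeyd, ha₀, ← aeval_def]
        exact hdne
      obtain ⟨a, haroot, hamem⟩ :=
        HenselianRing.is_henselian (I := maximalIdeal R) P (hmonic.map _) a₀ heval hderiv
      have hπa : residue R a = x := by
        have h2 : residue R (a - a₀) = 0 := Ideal.Quotient.eq_zero_iff_mem.mpr hamem
        rw [map_sub, sub_eq_zero] at h2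
        rw [h2, ha₀]
      have hroot : p.eval₂ M.f a = 0 := by
        rw [← Polynomial.eval_map, ← hP]
        exact haroot
      have hrootk : p.eval₂ (algebraMap M.F (ResidueField R)) x = 0 := by
        rw [← aeval_def]; exact minpoly.aeval _ _
      set cR := AdjoinRoot.lift M.f a hroot with hcR
      set ck := AdjoinRoot.lift (algebraMap M.F (ResidueField R)) x hrootk with hck
      have hcc : (residue R).comp cR = ck := by
        have h1 : ((residue R).comp cR).comp (AdjoinRoot.mk p) = ck.comp (AdjoinRoot.mk p) := by
          apply Polynomial.ringHom_ext
          · intro b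
            show residue R (cR (AdjoinRoot.of p b)) = ck (AdjoinRoot.of p b)
            rw [hcR, hck, AdjoinRoot.lift_of, AdjoinRoot.lift_of]
            exact M.sec b
          · show residue R (cR (AdjoinRoot.root p)) = ck (AdjoinRoot.root p)
            rw [hcR, hck, AdjoinRoot.lift_root, AdjoinRoot.lift_root]
            exact hπa
        refine RingHom.ext fun e => ?_
        obtain ⟨P', rfl⟩ := AdjoinRoot.mk_surjective e
        exact RingHom.congr_fun h1 P'
      obtain ⟨L', hle, hmem⟩ := M.step cR ck (RingHom.congr_fun hcc)
        (fun b => ⟨AdjoinRoot.of p b, by rw [hck, AdjoinRoot.lift_of]; rfl,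
          by rw [hcR, AdjoinRoot.lift_of]⟩)
      exact hcontra L' hle (hmem x ⟨AdjoinRoot.root p, by rw [hck, AdjoinRoot.lift_root]⟩)
    · -- transcendental case: lift the rational function field
      have htr : Transcendental M.F x := halg
      obtain ⟨t, ht⟩ := residue_surjective (R := R) x
      set g₀ : Polynomial M.F →+* R := eval₂RingHom M.f t with hg₀def
      have hg₀ : ∀ pp : Polynomial M.F, residue R (g₀ pp) = aeval x pp := by
        intro pp
        show residue R (eval₂ M.f t pp) = _
        rw [Polynomial.hom_eval₂, halgmap, ht, aeval_def]
      have hu : ∀ m : nonZeroDivisors (Polynomial M.F), IsUnit (g₀ m.1) := by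
        intro m
        apply aux_isUnit_of_residue_ne_zero
        rw [hg₀]
        intro h0
        exact nonZeroDivisors.coe_ne_zero m ((transcendental_iff.mp htr) _ h0)
      have hu' : ∀ m : nonZeroDivisors (Polynomial M.F),
          IsUnit ((aeval x : Polynomial M.F →ₐ[M.F] ResidueField R).toRingHom m.1) := by
        intro m
        apply isUnit_iff_ne_zero.mpr
        intro h0
        exact nonZeroDivisors.coe_ne_zero m ((transcendental_iff.mp htr) _ h0)
      set E := FractionRing (Polynomial M.F) with hE
      set cR : E →+* R := IsLocalization.lift hu with hcR
      set ck : E →+* ResidueField R := IsLocalization.lift hu' with hck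
      have hcc : (residue R).comp cR = ck := by
        apply IsLocalization.ringHom_ext (nonZeroDivisors (Polynomial M.F))
        rw [hck, IsLocalization.lift_comp, RingHom.comp_assoc, hcR, IsLocalization.lift_comp]
        exact RingHom.ext fun pp => hg₀ pp
      obtain ⟨L', hle, hmem⟩ := M.step cR ck (RingHom.congr_fun hcc)
        (fun b => ⟨algebraMap (Polynomial M.F) E (C b), by
          rw [hck, IsLocalization.lift_eq]
          show aeval x (C b) = _
          rw [aeval_C]; rfl, by rw [hcR, IsLocalization.lift_eq]; exact eval₂_C _ _⟩)
      refine hcontra L' hle (hmem x ⟨algebraMap (Polynomial M.F) E X, ?_⟩)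
      rw [hck, IsLocalization.lift_eq]
      show aeval x X = x
      rw [aeval_X]
  -- conclude
  let ι : ResidueField R →+* M.F :=
    { toFun := fun y => ⟨y, htop y⟩
      map_one' := rfl
      map_mul' := fun _ _ => rfl
      map_zero' := rfl
      map_add' := fun _ _ => rfl }
  refine ⟨M.f.comp ι, ?_⟩
  ext y
  exact M.sec ⟨y, htop y⟩
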